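/- Let p ≥ 1, let Σ : ℝ^p → PD_p(ℝ) assign to each point a real positive definite p×p matrix, and let a > 0. Define C(x,y) = π^{-p/2} det((Σ_x+Σ_y)/2)^{-1/2} ∫_0^∞ (1/(a√π)) exp(−t²/(4a²)) exp(−Q_xy(x−y)/t²) dt. Then C(x,x) > 0 for every x, and for all x, y ∈ ℝ^p the normalized kernel is the non-stationary exponential correlation: C(x,y) / ( √(C(x,x)) · √(C(y,y)) ) = φ_xy exp( −√(Q_xy(x−y)) / a ). -/

import Mathlib

open MeasureTheory Matrix Real
open Set


lemma glasser {α β : ℝ} (hα : 0 < α) (hβ : 0 ≤ β) :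
    ∫ t in Ioi (0:ℝ), Real.exp (-(α*t^2) - β/t^2)
      = Real.sqrt (π/α) / 2 * Real.exp (-2 * Real.sqrt (α*β)) := by
  rcases eq_or_lt_of_le hβ with hβ0 | hβp
  · simp only [← hβ0, zero_div, sub_zero, mul_zero, Real.sqrt_zero, neg_zero, Real.exp_zero,
      mul_one]
    simpa [neg_mul] using integral_gaussian_Ioi α
  · set sa := Real.sqrt α with hsa_def
    set sb := Real.sqrt β with hsb_def
    have hsa : 0 < sa := Real.sqrt_pos.2 hα
    have hsb : 0 < sb := Real.sqrt_pos.2 hβp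
    have hsa2 : sa^2 = α := Real.sq_sqrt hα.le
    have hsb2 : sb^2 = β := Real.sq_sqrt hβp.le
    set c := sb/sa with hc_def
    have hc : 0 < c := div_pos hsb hsa
    set f : ℝ → ℝ := fun t => Real.exp (-(α*t^2) - β/t^2) with hf_def
    -- integrability of f
    have hfm : Measurable f := by fun_prop
    have hf_int : IntegrableOn f (Ioi 0) := by
      apply Integrable.mono' (integrable_exp_neg_mul_sq hα).integrableOn
      · exact hfm.aestronglyMeasurable
      · filter_upwards with t
        rw [Real.norm_eq_abs, abs_of_pos (Real.exp_pos _)]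
        apply Real.exp_le_exp.2
        have h0 : 0 ≤ β / t^2 := div_nonneg hβ (sq_nonneg t)
        nlinarith
    -- substitution A : t ↦ c / t
    have himA : (fun t => c/t) '' Ioi 0 = Ioi 0 := by
      ext u
      constructor
      · rintro ⟨t, ht, rfl⟩
        exact div_pos hc ht
      · intro hu
        exact ⟨c/u, div_pos hc hu, by field_simp⟩
    have hderivA : ∀ t ∈ Ioi (0:ℝ), HasDerivWithinAt (fun t => c/t) (c * -(t^2)⁻¹) (Ioi 0) t := by
      intro t ht
      exact ((hasDerivAt_inv (ne_of_gt ht)).const_mul c).hasDerivWithinAt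
    have hinjA : InjOn (fun t => c/t) (Ioi 0) := by
      intro x hx y hy hxy
      simp only at hxy
      rw [div_eq_div_iff (ne_of_gt hx) (ne_of_gt hy)] at hxy
      exact (mul_left_cancel₀ (ne_of_gt hc) hxy).symm
    have hfeq : ∀ t ∈ Ioi (0:ℝ), |c * -(t^2)⁻¹| • f (c/t) = (c/t^2) * f t := by
      intro t ht
      have ht0 : (t:ℝ) ≠ 0 := ne_of_gt ht
      have h1 : c * -(t^2)⁻¹ = -(c/t^2) := by field_simp
      rw [h1, abs_neg, abs_of_pos (by positivity), smul_eq_mul]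
      congr 1
      simp only [hf_def]
      congr 1
      have hc0 : c ≠ 0 := ne_of_gt hc
      have hαc : α * c^2 = β := by
        rw [hc_def]; field_simp; nlinarith [hsa2, hsb2]
      rw [← hαc]
      field_simp
      ring
    have EA : ∫ t in Ioi (0:ℝ), f t = ∫ t in Ioi (0:ℝ), (c/t^2) * f t := by
      have := integral_image_eq_integral_abs_deriv_smul measurableSet_Ioi hderivA hinjA f
      rw [himA] at this
      rw [this]
      exact setIntegral_congr_fun measurableSet_Ioi hfeq
    have hg_int : IntegrableOn (fun t => (c/t^2) * f t) (Ioi 0) := by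
      have := (integrableOn_image_iff_integrableOn_abs_deriv_smul measurableSet_Ioi
        hderivA hinjA f)
      rw [himA] at this
      exact (this.1 hf_int).congr_fun hfeq measurableSet_Ioi
    -- substitution B : φ t = sa*t - sb/t
    set φ : ℝ → ℝ := fun t => sa*t - sb/t with hφ_def
    set φ' : ℝ → ℝ := fun t => sa + sb/t^2 with hφ'_def
    have hderivB : ∀ t ∈ Ioi (0:ℝ), HasDerivWithinAt φ (φ' t) (Ioi 0) t := by
      intro t ht
      have h1 : HasDerivAt φ (sa * 1 - sb * -(t^2)⁻¹) t :=
        ((hasDerivAt_id t).const_mul sa).sub ((hasDerivAt_inv (ne_of_gt ht)).const_mul sb)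
      have h2 : sa * 1 - sb * -(t^2)⁻¹ = φ' t := by
        have : (t:ℝ) ≠ 0 := ne_of_gt ht
        simp only [hφ'_def]
        field_simp
        ring
      rw [h2] at h1
      exact h1.hasDerivWithinAt
    have hmonoB : StrictMonoOn φ (Ioi 0) := by
      intro x hx y hy hxy
      have hx0 : (0:ℝ) < x := hx
      have hy0 : (0:ℝ) < y := hy
      have h1 : sb/y < sb/x := div_lt_div_of_pos_left hsb hx0 hxy
      have h2 : sa*x < sa*y := by nlinarith
      simp only [hφ_def]
      linarith
    have himB : φ '' Ioi 0 = univ := by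
      ext u
      simp only [mem_univ, iff_true]
      set D := Real.sqrt (u^2 + 4*sa*sb) with hD
      have hD2 : D^2 = u^2 + 4*sa*sb := Real.sq_sqrt (by positivity)
      have hDnn : 0 ≤ D := Real.sqrt_nonneg _
      have h1 : -D < u := by nlinarith
      have h2 : u < D := by nlinarith
      have ht : 0 < (u + D)/(2*sa) := div_pos (by linarith) (by linarith)
      refine ⟨(u + D)/(2*sa), ht, ?_⟩
      have h3 : u + D ≠ 0 := by linarith
      simp only [hφ_def]
      field_simp
      ring_nf
      nlinarith [hD2]
    have EB : ∫ t in Ioi (0:ℝ), φ' t * Real.exp (-(φ t)^2) = Real.sqrt π := by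
      have h := integral_image_eq_integral_abs_deriv_smul measurableSet_Ioi hderivB
        hmonoB.injOn (fun u => Real.exp (-u^2))
      rw [himB, Measure.restrict_univ] at h
      calc ∫ t in Ioi (0:ℝ), φ' t * Real.exp (-(φ t)^2)
          = ∫ t in Ioi (0:ℝ), |φ' t| • Real.exp (-(φ t)^2) := by
            apply setIntegral_congr_fun measurableSet_Ioi
            intro t ht
            have ht0 : (0:ℝ) < t := ht
            have habs : |φ' t| = φ' t := abs_of_pos (by simp only [hφ'_def]; positivity)
            simp only [smul_eq_mul, habs]
        _ = ∫ u : ℝ, Real.exp (-u^2) := h.symm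
        _ = Real.sqrt π := by simpa using integral_gaussian 1
    -- combine
    have hcomb : ∀ t ∈ Ioi (0:ℝ),
        f t + (c/t^2) * f t = sa⁻¹ * (φ' t * Real.exp (-(φ t)^2)) * Real.exp (-(2*sa*sb)) := by
      intro t ht
      have ht0 : (t:ℝ) ≠ 0 := ne_of_gt ht
      simp only [hf_def, hφ_def, hφ'_def]
      have hexp : Real.exp (-(α*t^2) - β/t^2)
          = Real.exp (-(sa*t - sb/t)^2) * Real.exp (-(2*sa*sb)) := by
        rw [← Real.exp_add]
        congr 1
        field_simp
        linear_combination (t^4) * hsa2 + hsb2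
      rw [hexp]
      have hcoef : 1 + c/t^2 = sa⁻¹ * (sa + sb/t^2) := by
        rw [hc_def]; field_simp
      linear_combination
        (Real.exp (-(sa*t-sb/t)^2) * Real.exp (-(2*sa*sb))) * hcoef
    have E2 : 2 * ∫ t in Ioi (0:ℝ), f t
        = sa⁻¹ * Real.sqrt π * Real.exp (-(2*sa*sb)) := by
      have h1 : (2:ℝ) * ∫ t in Ioi (0:ℝ), f t
          = ∫ t in Ioi (0:ℝ), (f t + (c/t^2) * f t) := by
        rw [integral_add hf_int hg_int, ← EA]; ring
      rw [h1, setIntegral_congr_fun measurableSet_Ioi hcomb]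
      rw [integral_mul_const, integral_const_mul, EB]
    have hsqrt1 : Real.sqrt (α*β) = sa*sb := Real.sqrt_mul hα.le β
    have hsqrt2 : Real.sqrt (π/α) = Real.sqrt π / sa := Real.sqrt_div Real.pi_pos.le α
    rw [hsqrt1, hsqrt2, show -2*(sa*sb) = -(2*sa*sb) by ring]
    linear_combination E2 / 2

lemma mixture {a : ℝ} (ha : 0 < a) {b : ℝ} (hb : 0 ≤ b) :
    ∫ t in Ioi (0:ℝ), (1/(a*Real.sqrt π)) * Real.exp (-t^2/(4*a^2)) * Real.exp (-b/t^2)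
      = Real.exp (-Real.sqrt b / a) := by
  have hα : 0 < (4*a^2)⁻¹ := by positivity
  have h1 : ∀ t : ℝ, (1/(a*Real.sqrt π)) * Real.exp (-t^2/(4*a^2)) * Real.exp (-b/t^2)
      = (1/(a*Real.sqrt π)) * Real.exp (-((4*a^2)⁻¹*t^2) - b/t^2) := by
    intro t
    rw [mul_assoc, ← Real.exp_add]
    congr 2
    field_simp
    ring
  simp_rw [h1]
  rw [integral_const_mul, glasser (α := (4*a^2)⁻¹) (β := b) hα hb]
  have e1 : Real.sqrt (π/(4*a^2)⁻¹) = 2*a*Real.sqrt π := by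
    rw [show π / (4*a^2)⁻¹ = π * (4*a^2) by field_simp, show π * (4*a^2) = (2*a)^2 * π by ring, Real.sqrt_mul (by positivity),
      Real.sqrt_sq (by positivity)]
  have e2 : Real.sqrt ((4*a^2)⁻¹ * b) = Real.sqrt b / (2*a) := by
    rw [Real.sqrt_mul hα.le, Real.sqrt_inv, show (4*a^2) = (2*a)^2 by ring,
      Real.sqrt_sq (by positivity)]
    ring
  rw [e1, e2, show -2*(Real.sqrt b/(2*a)) = -Real.sqrt b/a by field_simp]
  have hπ : Real.sqrt π ≠ 0 := ne_of_gt (Real.sqrt_pos.2 Real.pi_pos)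
  field_simp
/-- `Q_xy(h) = hᵀ ((Σx+Σy)/2)⁻¹ h`. -/
noncomputable def Qform {p : ℕ} (A B : Matrix (Fin p) (Fin p) ℝ) (h : Fin p → ℝ) : ℝ :=
  h ⬝ᵥ ((((2:ℝ)⁻¹ • (A + B))⁻¹).mulVec h)

/-- `φ_xy = det(Σx)^{1/4} det(Σy)^{1/4} det((Σx+Σy)/2)^{-1/2}`. -/
noncomputable def phiFactor {p : ℕ} (A B : Matrix (Fin p) (Fin p) ℝ) : ℝ :=
  A.det ^ ((1:ℝ) / 4) * B.det ^ ((1:ℝ) / 4) * ((2:ℝ)⁻¹ • (A + B)).det ^ (-(1:ℝ) / 2)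


lemma posdef_half_sum {p : ℕ} {A B : Matrix (Fin p) (Fin p) ℝ}
    (hA : A.PosDef) (hB : B.PosDef) : ((2:ℝ)⁻¹ • (A + B)).PosDef := by
  have hAB := hA.add hB
  refine Matrix.PosDef.of_dotProduct_mulVec_pos ?_ ?_
  · show ((2:ℝ)⁻¹ • (A + B))ᴴ = (2:ℝ)⁻¹ • (A + B)
    rw [Matrix.conjTranspose_smul, star_trivial, hAB.1]
  · intro v hv
    rw [Matrix.smul_mulVec, dotProduct_smul, smul_eq_mul]
    exact mul_pos (by norm_num) (hAB.dotProduct_mulVec_pos hv)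

lemma qform_nonneg {p : ℕ} {A B : Matrix (Fin p) (Fin p) ℝ}
    (hA : A.PosDef) (hB : B.PosDef) (h : Fin p → ℝ) : 0 ≤ Qform A B h := by
  have hM := (posdef_half_sum hA hB).inv
  have h2 := hM.posSemidef.dotProduct_mulVec_nonneg h
  simpa [Qform] using h2

/-- normalizing the Gaussian scale mixture yields the non-stationary
exponential correlation `φ_xy exp(−√(Q_xy(x−y))/a)`. -/
theorem normalized_exponential_nonstationary (p : ℕ) (hp : 1 ≤ p)
    (S : (Fin p → ℝ) → Matrix (Fin p) (Fin p) ℝ) (hS : ∀ x, (S x).PosDef)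
    (a : ℝ) (ha : 0 < a)
    (C : (Fin p → ℝ) → (Fin p → ℝ) → ℝ)
    (hC : ∀ x y, C x y = Real.pi ^ (-(p : ℝ) / 2) *
      ((2:ℝ)⁻¹ • (S x + S y)).det ^ (-(1:ℝ) / 2) *
      ∫ t in Set.Ioi (0:ℝ),
        (1 / (a * Real.sqrt Real.pi)) * Real.exp (-t ^ 2 / (4 * a ^ 2)) *
          Real.exp (-(Qform (S x) (S y) (x - y)) / t ^ 2)) :
    (∀ x : Fin p → ℝ, 0 < C x x) ∧
    ∀ x y : Fin p → ℝ,
      C x y / (Real.sqrt (C x x) * Real.sqrt (C y y)) =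
        phiFactor (S x) (S y) *
          Real.exp (-Real.sqrt (Qform (S x) (S y) (x - y)) / a) := by
  have hCval : ∀ x y, C x y = Real.pi ^ (-(p : ℝ) / 2) *
      ((2:ℝ)⁻¹ • (S x + S y)).det ^ (-(1:ℝ) / 2) *
      Real.exp (-Real.sqrt (Qform (S x) (S y) (x - y)) / a) := by
    intro x y
    rw [hC x y, mixture ha (qform_nonneg (hS x) (hS y) _)]
  have hMxx : ∀ x, (2:ℝ)⁻¹ • (S x + S x) = S x := by
    intro x
    rw [← two_smul ℝ (S x), smul_smul]
    norm_num
  have hQxx : ∀ x, Qform (S x) (S x) (x - x) = 0 := by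
    intro x
    simp [Qform, sub_self]
  have hCxx : ∀ x, C x x = Real.pi ^ (-(p : ℝ) / 2) * (S x).det ^ (-(1:ℝ) / 2) := by
    intro x
    rw [hCval x x, hMxx x, hQxx x]
    simp
  have hdet : ∀ x, 0 < (S x).det := fun x => (hS x).det_pos
  have hP : (0:ℝ) < Real.pi ^ (-(p : ℝ) / 2) := Real.rpow_pos_of_pos Real.pi_pos _
  constructor
  · intro x
    rw [hCxx x]
    have := hdet x
    positivity
  · intro x y
    have hdM : 0 < ((2:ℝ)⁻¹ • (S x + S y)).det := (posdef_half_sum (hS x) (hS y)).det_pos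
    have h4 : ∀ d : ℝ, 0 < d → Real.sqrt (d ^ (-(1:ℝ)/2)) = (d ^ ((1:ℝ)/4))⁻¹ := by
      intro d hd
      rw [Real.sqrt_eq_rpow, ← Real.rpow_mul hd.le,
        show (-(1:ℝ)/2 * (1/2)) = -((1:ℝ)/4) by norm_num, Real.rpow_neg hd.le]
    rw [hCval x y, hCxx x, hCxx y, Real.sqrt_mul hP.le, Real.sqrt_mul hP.le,
      h4 _ (hdet x), h4 _ (hdet y), phiFactor]
    have hsp : (0:ℝ) < Real.sqrt (Real.pi ^ (-(p : ℝ) / 2)) := Real.sqrt_pos.2 hP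
    have hx4 : (0:ℝ) < (S x).det ^ ((1:ℝ)/4) := Real.rpow_pos_of_pos (hdet x) _
    have hy4 : (0:ℝ) < (S y).det ^ ((1:ℝ)/4) := Real.rpow_pos_of_pos (hdet y) _
    rw [show Real.pi ^ (-(p : ℝ) / 2)
        = Real.sqrt (Real.pi ^ (-(p : ℝ) / 2)) * Real.sqrt (Real.pi ^ (-(p : ℝ) / 2)) from
      (Real.mul_self_sqrt hP.le).symm]
    field_simp
    simp only [Real.sqrt_sq (Real.sqrt_nonneg _)]
    ring
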